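/- For every λ ∈ (0,1), ∫₀^∞ max{(1+λ)²·e^{−2(1+λ)u/(1−λ)} − (1−λ)²·e^{−2(1−λ)u/(1+λ)}, 0} du = 2λ · ((1−λ)/(1+λ))^{(1+λ²)/(2λ)}. -/

import Mathlib

open MeasureTheory

/-- For `λ ∈ (0,1)`,
`∫₀^∞ max{(1+λ)²·e^{−2(1+λ)u/(1−λ)} − (1−λ)²·e^{−2(1−λ)u/(1+λ)}, 0} du
  = 2λ · ((1−λ)/(1+λ))^{(1+λ²)/(2λ)}`. -/
theorem stmt_10 (l : ℝ) (hl : l ∈ Set.Ioo (0 : ℝ) 1) :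
    ∫ u in Set.Ioi (0 : ℝ),
        max ((1 + l) ^ 2 * Real.exp (-(2 * (1 + l) * u) / (1 - l))
          - (1 - l) ^ 2 * Real.exp (-(2 * (1 - l) * u) / (1 + l))) 0
      = 2 * l * ((1 - l) / (1 + l)) ^ ((1 + l ^ 2) / (2 * l)) := by
  obtain ⟨h0, h1⟩ := hl
  have hp : (0:ℝ) < 1 + l := by linarith
  have hm : (0:ℝ) < 1 - l := by linarith
  have hq : (0:ℝ) < 1 - l ^ 2 := by nlinarith
  set a : ℝ := 2 * (1 + l) / (1 - l) with ha_def
  set b : ℝ := 2 * (1 - l) / (1 + l) with hb_def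
  set L : ℝ := Real.log ((1 + l) / (1 - l)) with hL_def
  set u₀ : ℝ := (1 - l ^ 2) / (4 * l) * L with hu0_def
  set c : ℝ := (1 + l ^ 2) / (2 * l) with hc_def
  set f : ℝ → ℝ := fun u => (1 + l) ^ 2 * Real.exp (-(2 * (1 + l) * u) / (1 - l))
          - (1 - l) ^ 2 * Real.exp (-(2 * (1 - l) * u) / (1 + l)) with hf_def
  set F : ℝ → ℝ := fun u => (1 - l ^ 2) / 2 * (Real.exp (-(b * u)) - Real.exp (-(a * u)))
    with hF_def
  show (∫ u in Set.Ioi (0:ℝ), max (f u) 0) = 2 * l * ((1 - l) / (1 + l)) ^ c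
  clear_value a b L u₀ c f F
  have hL : 0 < L := by
    rw [hL_def]; exact Real.log_pos (by rw [lt_div_iff₀ hm]; linarith)
  have hLsub : L = Real.log (1 + l) - Real.log (1 - l) := by
    rw [hL_def, Real.log_div (by linarith) (by linarith)]
  have hu0 : 0 < u₀ := by
    rw [hu0_def]
    exact mul_pos (div_pos hq (by linarith)) hL
  have hfa : ∀ u, f u = (1 + l) ^ 2 * Real.exp (-(a * u)) - (1 - l) ^ 2 * Real.exp (-(b * u)) := by
    intro u
    have e1 : -(2 * (1 + l) * u) / (1 - l) = -(a * u) := by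
      rw [ha_def]; field_simp
    have e2 : -(2 * (1 - l) * u) / (1 + l) = -(b * u) := by
      rw [hb_def]; field_simp
    rw [hf_def]; dsimp only; rw [e1, e2]
  have hab : a - b = 8 * l / (1 - l ^ 2) := by
    rw [ha_def, hb_def]; field_simp [hm.ne', hp.ne']; ring
  have hab' : 0 < a - b := by rw [hab]; exact div_pos (by linarith) hq
  have h3 : u₀ * (a - b) = 2 * (Real.log (1 + l) - Real.log (1 - l)) := by
    rw [hu0_def, hab, ← hLsub]
    field_simp [h0.ne', hq.ne']
    ring
  -- sign of f
  have hsign : ∀ u, u ≤ u₀ ↔ 0 ≤ f u := by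
    intro u
    rw [hfa]
    have e1 : (1 + l) ^ 2 * Real.exp (-(a * u)) = Real.exp (2 * Real.log (1 + l) + -(a * u)) := by
      rw [Real.exp_add, two_mul, Real.exp_add, Real.exp_log (by linarith)]; ring
    have e2 : (1 - l) ^ 2 * Real.exp (-(b * u)) = Real.exp (2 * Real.log (1 - l) + -(b * u)) := by
      rw [Real.exp_add, two_mul, Real.exp_add, Real.exp_log (by linarith)]; ring
    rw [e1, e2, sub_nonneg, Real.exp_le_exp]
    constructor
    · intro h
      have h2 : u * (a - b) ≤ u₀ * (a - b) := mul_le_mul_of_nonneg_right h hab'.le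
      rw [h3] at h2
      linarith
    · intro h
      have h2 : u * (a - b) ≤ 2 * (Real.log (1 + l) - Real.log (1 - l)) := by nlinarith
      rw [← h3] at h2
      exact le_of_mul_le_mul_right h2 hab'
  -- replace max by indicator
  have hind : ∀ u, max (f u) 0 = Set.indicator (Set.Iic u₀) f u := by
    intro u
    by_cases h : u ≤ u₀
    · rw [Set.indicator_of_mem (Set.mem_Iic.mpr h), max_eq_left ((hsign u).mp h)]
    · rw [Set.indicator_of_notMem (by simpa using h), max_eq_right]
      have : ¬ (0 ≤ f u) := fun hh => h ((hsign u).mpr hh)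
      linarith
  have step1 : (∫ u in Set.Ioi (0:ℝ), max (f u) 0) = ∫ u in Set.Ioc (0:ℝ) u₀, f u := by
    rw [show (fun u => max (f u) 0) = Set.indicator (Set.Iic u₀) f from funext hind]
    rw [setIntegral_indicator measurableSet_Iic, Set.Ioi_inter_Iic]
  -- FTC
  have hderiv : ∀ u, HasDerivAt F (f u) u := by
    intro u
    have h1 : HasDerivAt (fun x : ℝ => Real.exp (-(a * x))) (Real.exp (-(a * u)) * -a) u := by
      simpa using (((hasDerivAt_id u).const_mul a).neg).exp
    have h2 : HasDerivAt (fun x : ℝ => Real.exp (-(b * x))) (Real.exp (-(b * u)) * -b) u := by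
      simpa using (((hasDerivAt_id u).const_mul b).neg).exp
    have h4 := (h2.sub h1).const_mul ((1 - l ^ 2) / 2)
    rw [hF_def]
    refine h4.congr_deriv ?_
    rw [hfa, ha_def, hb_def]
    field_simp
    ring
  have hcont : Continuous f := by
    rw [hf_def]; fun_prop
  have step2 : (∫ u in Set.Ioc (0:ℝ) u₀, f u) = F u₀ - F 0 := by
    rw [← intervalIntegral.integral_of_le hu0.le]
    exact intervalIntegral.integral_eq_sub_of_hasDerivAt (fun u _ => hderiv u)
      (hcont.intervalIntegrable 0 u₀)
  have hF0 : F 0 = 0 := by simp [hF_def]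
  have hexpL : Real.exp L = (1 + l) / (1 - l) := by
    rw [hL_def]; exact Real.exp_log (by positivity)
  have hbu : -(b * u₀) = L * -c + L := by
    rw [hb_def, hu0_def, hc_def]; field_simp [h0.ne', hm.ne', hp.ne']; ring
  have hau : -(a * u₀) = L * -c - L := by
    rw [ha_def, hu0_def, hc_def]; field_simp [h0.ne', hm.ne', hp.ne']; ring
  have e3 : Real.exp (-(b * u₀)) = Real.exp (L * -c) * ((1 + l) / (1 - l)) := by
    rw [hbu, Real.exp_add, hexpL]
  have e4 : Real.exp (-(a * u₀)) = Real.exp (L * -c) * ((1 - l) / (1 + l)) := by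
    rw [hau, Real.exp_sub, hexpL, div_eq_mul_inv, inv_div]
  have hlogrho : Real.log ((1 - l) / (1 + l)) = -L := by
    rw [show ((1 - l) / (1 + l) : ℝ) = ((1 + l) / (1 - l))⁻¹ from (inv_div _ _).symm,
      Real.log_inv, hL_def]
  have hrho : ((1 - l) / (1 + l) : ℝ) ^ c = Real.exp (L * -c) := by
    rw [Real.rpow_def_of_pos (by positivity), hlogrho]; ring_nf
  calc (∫ u in Set.Ioi (0:ℝ), max (f u) 0) = F u₀ - F 0 := by rw [step1, step2]
    _ = (1 - l ^ 2) / 2 * (Real.exp (L * -c) * ((1 + l) / (1 - l))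
          - Real.exp (L * -c) * ((1 - l) / (1 + l))) := by
        rw [hF0, sub_zero, hF_def]; dsimp only; rw [e3, e4]
    _ = 2 * l * ((1 - l) / (1 + l)) ^ c := by
        rw [hrho]
        field_simp
        ring
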